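/- For the information system with universe ℤ and attribute set containing all functions ℤ → {0,1} vanishing on the positive integers together with the functions p_i and l_{2^i} (which vanish on non-positive integers), the set B = {2^r + m, 2^r + m + 1, …, 2^{r+1}} (for r,m ∈ ℕ with m ≤ 2^r) is an (m+3)-definable set, and every m-definable subset of B is a singleton; hence B is not a union of fewer than 2^r − m + 1 m-definable sets. -/
import Mathlib


/-- The attribute `p i` on the universe `ℤ`: `p i a = 1` iff `a = i`. -/
def p (i : ℕ) (a : ℤ) : Bool := decide (a = (i : ℤ))

/-- The attribute `l_{2^i}` on the universe `ℤ`: `lpow i a = 1` iff `a > 2^i`. -/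
def lpow (i : ℕ) (a : ℤ) : Bool := decide ((2 ^ i : ℤ) < a)

/-- The attribute set `F₇ = {p_i} ∪ {l_{2^i}} ∪ F₀`, where `F₀` is the set of all functions
`ℤ → {0,1}` vanishing on the positive integers. -/
def F : Set (ℤ → Bool) :=
  Set.range p ∪ Set.range lpow ∪ {f | ∀ a : ℤ, 0 < a → f a = false}

/-- `B` is an `m`-definable set of the information system with universe `A`
and attribute set `F`. -/
def Definable {A : Type*} (F : Set (A → Bool)) (m : ℕ) (B : Set A) : Prop :=
  B.Nonempty ∧ ∃ f : Fin m → A → Bool, ∃ δ : Fin m → Bool,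
    (∀ i, f i ∈ F) ∧ B = {a | ∀ i, f i a = δ i}

lemma pow2_le_of_lt {i r : ℕ} (h : (2:ℤ)^i < 2^(r+1)) : (2:ℤ)^i ≤ 2^r := by
  rcases le_or_gt i r with h'|h'
  · exact pow_le_pow_right₀ (by norm_num) h'
  · exact absurd (pow_le_pow_right₀ (by norm_num) h' : (2:ℤ)^(r+1) ≤ 2^i) (by linarith)

lemma part2 (r m : ℕ) (hm : 1 ≤ m) (hmr : m ≤ 2 ^ r) (C : Set ℤ)
    (hC : Definable F m C)
    (hCB : C ⊆ {a : ℤ | (2 ^ r + m : ℤ) ≤ a ∧ a ≤ (2 ^ (r + 1) : ℤ)}) :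
    ∃ a : ℤ, C = {a} := by
  obtain ⟨⟨a₀, ha₀⟩, f, δ, hfF, hCeq⟩ := hC
  obtain ⟨ha₀l, ha₀u⟩ := hCB ha₀
  have hmZ : (m:ℤ) ≤ 2^r := by exact_mod_cast hmr
  have h2r : (1:ℤ) ≤ 2^r := by exact_mod_cast Nat.one_le_two_pow
  have hps : (2:ℤ)^(r+1) = 2^r * 2 := pow_succ 2 r
  have hmem : ∀ x : ℤ, x ∈ C ↔ ∀ i, f i x = δ i := by
    intro x; rw [hCeq]; rfl
  by_cases hp : ∃ k v, f k = p v ∧ δ k = true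
  · obtain ⟨k, v, hk, hδ⟩ := hp
    refine ⟨a₀, ?_⟩
    have hval : ∀ x ∈ C, x = (v:ℤ) := by
      intro x hx
      have hx' := (hmem x).mp hx k
      rw [hk, hδ] at hx'
      simpa [p] using hx'
    ext x
    simp only [Set.mem_singleton_iff]
    exact ⟨fun hx => by rw [hval x hx, ← hval a₀ ha₀], fun hx => by rwa [hx]⟩
  · push_neg at hp
    exfalso
    set y : Fin m → ℤ := fun j => (2:ℤ)^r + j with hy
    have hyC : ∀ j, y j ∉ C := by
      intro j hj
      have h1 := (hCB hj).1
      have h2 : (j:ℤ) < m := by exact_mod_cast j.2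
      simp only [hy] at h1
      linarith
    have hyexcl : ∀ j, ∃ k, f k (y j) ≠ δ k := by
      intro j
      by_contra h
      push_neg at h
      exact hyC j ((hmem _).mpr h)
    choose g hg using hyexcl
    have hypos : ∀ j : Fin m, (0:ℤ) < y j := by
      intro j
      have : (0:ℤ) ≤ j := by exact_mod_cast (Nat.zero_le j.1)
      simp only [hy]; linarith
    have ha₀pos : (0:ℤ) < a₀ := by linarith
    have hinj : Function.Injective g := by
      intro j j' hjj'
      have h1 := hg j
      have h2 := hg j'
      rw [hjj'] at h1
      set k := g j' with hk
      have hka₀ := (hmem a₀).mp ha₀ k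
      rcases hfF k with (hv | hv) | h0
      · obtain ⟨v, hv⟩ := hv
        have hδk : δ k = false := by
          have := hp k v hv.symm
          simpa using this
        rw [← hv, hδk] at h1 h2
        have e1 : y j = (v:ℤ) := by simpa [p] using h1
        have e2 : y j' = (v:ℤ) := by simpa [p] using h2
        have : (j:ℤ) = (j':ℤ) := by
          simp only [hy] at e1 e2; linarith
        exact Fin.ext (by exact_mod_cast this)
      · obtain ⟨i, hv⟩ := hv
        rw [← hv] at hka₀ h1 h2
        cases hδk : δ k with
        | false =>
          rw [hδk] at hka₀ h1
          have hle : a₀ ≤ 2^i := by simpa [lpow, not_lt] using hka₀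
          have hgt : (2:ℤ)^i < y j := by simpa [lpow] using h1
          have h2' : (j:ℤ) < m := by exact_mod_cast j.2
          simp only [hy] at hgt
          linarith
        | true =>
          rw [hδk] at hka₀ h1 h2
          have hlt : (2:ℤ)^i < a₀ := by simpa [lpow] using hka₀
          have hile : (2:ℤ)^i ≤ 2^r := pow2_le_of_lt (by linarith)
          have e1 : y j ≤ 2^i := by simpa [lpow, not_lt] using h1
          have e2 : y j' ≤ 2^i := by simpa [lpow, not_lt] using h2
          have hj0 : (j:ℤ) ≤ 0 := by simp only [hy] at e1; linarith
          have hj'0 : (j':ℤ) ≤ 0 := by simp only [hy] at e2; linarith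
          have hjn : (0:ℤ) ≤ (j:ℤ) := by exact_mod_cast (Nat.zero_le j.1)
          have hjn' : (0:ℤ) ≤ (j':ℤ) := by exact_mod_cast (Nat.zero_le j'.1)
          have : (j:ℤ) = (j':ℤ) := by linarith
          exact Fin.ext (by exact_mod_cast this)
      · exfalso
        apply h1
        rw [h0 _ (hypos j), ← h0 a₀ ha₀pos, hka₀]
    have hsurj := Finite.injective_iff_surjective.mp hinj
    have hz : ((2:ℤ)^(r+1) + 1) ∈ C := by
      rw [hmem]
      intro k
      obtain ⟨j, hj⟩ := hsurj k
      have h1 := hg j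
      rw [hj] at h1
      have hka₀ := (hmem a₀).mp ha₀ k
      rcases hfF k with (hv | hv) | h0
      · obtain ⟨v, hv⟩ := hv
        have hδk : δ k = false := by
          have := hp k v hv.symm
          simpa using this
        rw [← hv, hδk] at h1 ⊢
        have e1 : y j = (v:ℤ) := by simpa [p] using h1
        have h2' : (j:ℤ) < m := by exact_mod_cast j.2
        simp only [p, decide_eq_false_iff_not]
        intro hzv
        rw [← e1] at hzv
        simp only [hy] at hzv
        linarith
      · obtain ⟨i, hv⟩ := hv
        rw [← hv] at hka₀ h1 ⊢
        cases hδk : δ k with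
        | false =>
          rw [hδk] at hka₀ h1
          have hle : a₀ ≤ 2^i := by simpa [lpow, not_lt] using hka₀
          have hgt : (2:ℤ)^i < y j := by simpa [lpow] using h1
          have h2' : (j:ℤ) < m := by exact_mod_cast j.2
          simp only [hy] at hgt
          linarith
        | true =>
          rw [hδk] at hka₀
          have hlt : (2:ℤ)^i < a₀ := by simpa [lpow] using hka₀
          simp only [lpow, decide_eq_true_eq]
          linarith
      · exfalso
        apply h1
        rw [h0 _ (hypos j), ← h0 a₀ ha₀pos, hka₀]
    have := (hCB hz).2
    linarith

def attr (r : ℕ) : ℕ → ℤ → Bool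
  | 0 => lpow r
  | 1 => lpow (r+1)
  | 2 => fun _ => false
  | (n+3) => p (2^r + n)

theorem stmt_11 (r m : ℕ) (hm : 1 ≤ m) (hmr : m ≤ 2 ^ r)
    (B : Set ℤ) (hB : B = {a : ℤ | (2 ^ r + m : ℤ) ≤ a ∧ a ≤ (2 ^ (r + 1) : ℤ)}) :
    Definable F (m + 3) B ∧
    (∀ C : Set ℤ, Definable F m C → C ⊆ B → ∃ a : ℤ, C = {a}) ∧
    (∀ k : ℕ, ∀ D : Fin k → Set ℤ, (∀ i, Definable F m (D i)) → B = ⋃ i, D i →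
      2 ^ r - m + 1 ≤ k) := by
  subst hB
  have hmZ : (m:ℤ) ≤ 2^r := by exact_mod_cast hmr
  have h2r : (1:ℤ) ≤ 2^r := by exact_mod_cast Nat.one_le_two_pow
  have hps : (2:ℤ)^(r+1) = 2^r * 2 := pow_succ 2 r
  refine ⟨?_, ?_, ?_⟩
  · -- Part 1 : (m+3)-definability
    refine ⟨⟨(2:ℤ)^(r+1), ⟨by linarith, le_rfl⟩⟩,
      fun i => attr r i.val, fun i => decide (i.val = 0), ?_, ?_⟩
    · rintro ⟨(_|_|_|n), hn⟩
      · exact Or.inl (Or.inr ⟨r, rfl⟩)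
      · exact Or.inl (Or.inr ⟨r+1, rfl⟩)
      · exact Or.inr (fun a _ => rfl)
      · exact Or.inl (Or.inl ⟨2^r + n, rfl⟩)
    · ext a
      simp only [Set.mem_setOf_eq]
      constructor
      · rintro ⟨h1, h2⟩ ⟨(_|_|_|n), hn⟩
        · show lpow r a = decide ((0:ℕ) = 0)
          have hlt : (2:ℤ)^r < a := by linarith
          simp [lpow, hlt]
        · show lpow (r+1) a = decide ((1:ℕ) = 0)
          have hle : ¬ ((2:ℤ)^(r+1) < a) := not_lt.mpr h2
          simp [lpow, hle]
        · rfl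
        · show p (2^r + n) a = decide ((n+3:ℕ) = 0)
          have hn' : (n:ℤ) < m := by exact_mod_cast (show n < m by omega)
          have hne : ¬ a = (2:ℤ)^r + (n:ℤ) := by
            intro he
            linarith
          simp [p, hne]
      · intro h
        have h0 : (2:ℤ)^r < a := by simpa [attr, lpow] using h ⟨0, by omega⟩
        have h1 : a ≤ 2^(r+1) := by simpa [attr, lpow, not_lt] using h ⟨1, by omega⟩
        refine ⟨?_, h1⟩
        by_contra hc
        push_neg at hc
        set j : ℕ := (a - 2^r).toNat with hj
        have hj1 : (j:ℤ) = a - 2^r := Int.toNat_of_nonneg (by linarith)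
        have hj2 : j < m := by
          have : (j:ℤ) < m := by rw [hj1]; linarith
          exact_mod_cast this
        have h3 : a ≠ ((2^r + j : ℕ) : ℤ) := by
          simpa [attr, p] using h ⟨j + 3, by omega⟩
        apply h3
        push_cast
        linarith
  · -- Part 2
    exact fun C hC hCB => part2 r m hm hmr C hC hCB
  · -- Part 3
    intro k D hD hBD
    have hsing : ∀ i, ∃ a, D i = {a} := by
      intro i
      refine part2 r m hm hmr _ (hD i) ?_
      rw [hBD]
      exact Set.subset_iUnion D i
    choose a ha using hsing
    have hsub : Finset.Icc ((2:ℤ)^r + m) (2^(r+1)) ⊆ Finset.image a Finset.univ := by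
      intro x hx
      rw [Finset.mem_Icc] at hx
      have hxB : x ∈ ⋃ i, D i := by rw [← hBD]; exact hx
      obtain ⟨i, hi⟩ := Set.mem_iUnion.mp hxB
      rw [ha i] at hi
      simp only [Finset.mem_image, Finset.mem_univ, true_and]
      exact ⟨i, hi.symm⟩
    have h1 : (Finset.Icc ((2:ℤ)^r + m) (2^(r+1))).card ≤ k := by
      calc (Finset.Icc ((2:ℤ)^r + m) (2^(r+1))).card
          ≤ (Finset.image a Finset.univ).card := Finset.card_le_card hsub
        _ ≤ (Finset.univ : Finset (Fin k)).card := Finset.card_image_le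
        _ = k := by simp
    have h2 : (Finset.Icc ((2:ℤ)^r + m) ((2:ℤ)^(r+1))).card = 2^r - m + 1 := by
      rw [Int.card_Icc]
      have hc : (2:ℤ)^r = ((2^r : ℕ) : ℤ) := by push_cast; ring
      rw [hps, hc]
      omega
    rw [h2] at h1
    exact h1
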